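/- Let A : [0, δ] → M_n(ℝ) be continuous, R the resolvent of Ṙ = AR, R(0) = Id, and Z₀ ∈ ℝⁿ. Then |R(t)Z₀ - Z₀ - (∫₀^t A(s) ds)·Z₀| ≤ |Z₀| · (∫₀^t |A(s)| ds)² · exp(∫₀^t |A(s)| ds) for all t ∈ [0, δ]. -/

import Mathlib

open MeasureTheory

/-- Second-order Taylor-type expansion of the resolvent of a linear ODE:
`|R(t)Z₀ - Z₀ - (∫₀^t A) Z₀| ≤ |Z₀| (∫₀^t |A|)² exp(∫₀^t |A|)`. -/
theorem stmt_11 (n : ℕ) (δ : ℝ) (hδ : 0 ≤ δ)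
    (A R : ℝ → EuclideanSpace ℝ (Fin n) →L[ℝ] EuclideanSpace ℝ (Fin n))
    (hA : ContinuousOn A (Set.Icc 0 δ))
    (hR : ∀ t ∈ Set.Icc (0 : ℝ) δ, HasDerivAt R (A t * R t) t)
    (hR0 : R 0 = 1) (Z₀ : EuclideanSpace ℝ (Fin n)) :
    ∀ t ∈ Set.Icc (0 : ℝ) δ,
      ‖R t Z₀ - Z₀ - (∫ s in (0 : ℝ)..t, A s) Z₀‖ ≤
        ‖Z₀‖ * (∫ s in (0 : ℝ)..t, ‖A s‖) ^ 2 * Real.exp (∫ s in (0 : ℝ)..t, ‖A s‖) := by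
  intro t ht
  obtain ⟨ht0, htδ⟩ := ht
  -- extend `A` continuously to all of `ℝ`
  set π : ℝ → ℝ := fun s => min δ (max 0 s) with hπdef
  have hπcont : Continuous π := continuous_const.min (continuous_const.max continuous_id)
  have hπmem : ∀ s, π s ∈ Set.Icc (0:ℝ) δ := fun s =>
    ⟨le_min hδ (le_max_left _ _), min_le_left _ _⟩
  have hπeq : ∀ s ∈ Set.Icc (0:ℝ) δ, π s = s := by
    intro s hs
    simp [hπdef, max_eq_right hs.1, min_eq_right hs.2]
  set A' : ℝ → EuclideanSpace ℝ (Fin n) →L[ℝ] EuclideanSpace ℝ (Fin n) :=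
    fun s => A (π s) with hA'def
  have hA'cont : Continuous A' := hA.comp_continuous hπcont hπmem
  have hA'eq : ∀ s ∈ Set.Icc (0:ℝ) δ, A' s = A s := fun s hs => by
    simp only [hA'def, hπeq s hs]
  set a : ℝ → ℝ := fun s => ‖A' s‖ with hadef
  have hacont : Continuous a := hA'cont.norm
  have hanonneg : ∀ s, 0 ≤ a s := fun s => norm_nonneg _
  set B₀ : ℝ → ℝ := fun x => ∫ s in (0:ℝ)..x, a s with hB₀def
  have hB₀d : ∀ x, HasDerivAt B₀ (a x) x := fun x =>
    intervalIntegral.integral_hasDerivAt_right (hacont.intervalIntegrable 0 x)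
      hacont.aestronglyMeasurable.stronglyMeasurableAtFilter hacont.continuousAt
  have hB₀0 : B₀ 0 = 0 := intervalIntegral.integral_same
  have hsub : Set.Icc (0:ℝ) t ⊆ Set.Icc 0 δ := Set.Icc_subset_Icc le_rfl htδ
  -- the solution y
  set y : ℝ → EuclideanSpace ℝ (Fin n) := fun x => R x Z₀ with hydef
  have hy : ∀ x ∈ Set.Icc (0:ℝ) δ, HasDerivAt y (A' x (y x)) x := by
    intro x hx
    have h1 := (hR x hx).clm_apply (hasDerivAt_const x Z₀)
    simpa [hA'eq x hx, ContinuousLinearMap.mul_apply] using h1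
  have hy0 : y 0 = Z₀ := by simp [hydef, hR0]
  have hycont : ContinuousOn y (Set.Icc 0 t) := fun x hx =>
    ((hy x (hsub hx)).continuousAt).continuousWithinAt
  have hy' : ∀ x ∈ Set.Ico (0:ℝ) t, HasDerivWithinAt y (A' x (y x)) (Set.Ici x) x :=
    fun x hx => ((hy x (hsub (Set.Ico_subset_Icc_self hx))).hasDerivWithinAt)
  -- Step 1: Gronwall bound ‖y x‖ ≤ ‖Z₀‖ exp (B₀ x)
  have hgr : ∀ x ∈ Set.Icc (0:ℝ) t, ‖y x‖ ≤ ‖Z₀‖ * Real.exp (B₀ x) := by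
    intro x hx
    have key : ∀ ε > (0:ℝ), ‖y x‖ ≤ (‖Z₀‖ + ε) * Real.exp (B₀ x + ε * x) := by
      intro ε hε
      have hBd : ∀ u, HasDerivAt (fun u => (‖Z₀‖ + ε) * Real.exp (B₀ u + ε * u))
          ((‖Z₀‖ + ε) * (Real.exp (B₀ u + ε * u) * (a u + ε))) u := by
        intro u
        have := (((hB₀d u).add ((hasDerivAt_id u).const_mul ε)).exp).const_mul (‖Z₀‖ + ε)
        simpa using this
      have := image_norm_le_of_norm_deriv_right_lt_deriv_boundary hycont hy'
        (B := fun u => (‖Z₀‖ + ε) * Real.exp (B₀ u + ε * u)) (f' := fun u => A' u (y u))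
        (by
          show ‖y 0‖ ≤ (‖Z₀‖ + ε) * Real.exp (B₀ 0 + ε * 0)
          rw [hy0, hB₀0]
          norm_num
          linarith) hBd
        (by
          intro u hu heq
          have hBpos : (0:ℝ) < (‖Z₀‖ + ε) * Real.exp (B₀ u + ε * u) :=
            mul_pos (by positivity) (Real.exp_pos _)
          calc ‖A' u (y u)‖ ≤ a u * ‖y u‖ := (A' u).le_opNorm _
            _ = a u * ((‖Z₀‖ + ε) * Real.exp (B₀ u + ε * u)) := by rw [heq]
            _ < (a u + ε) * ((‖Z₀‖ + ε) * Real.exp (B₀ u + ε * u)) := by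
                apply mul_lt_mul_of_pos_right _ hBpos
                linarith
            _ = (‖Z₀‖ + ε) * (Real.exp (B₀ u + ε * u) * (a u + ε)) := by ring)
      exact this hx
    have htend : Filter.Tendsto (fun ε : ℝ => (‖Z₀‖ + ε) * Real.exp (B₀ x + ε * x))
        (nhdsWithin 0 (Set.Ioi 0)) (nhds (‖Z₀‖ * Real.exp (B₀ x))) := by
      have : ContinuousAt (fun ε : ℝ => (‖Z₀‖ + ε) * Real.exp (B₀ x + ε * x)) 0 := by
        fun_prop
      have h0 : (‖Z₀‖ + 0) * Real.exp (B₀ x + 0 * x) = ‖Z₀‖ * Real.exp (B₀ x) := by norm_num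
      exact h0 ▸ this.continuousWithinAt.tendsto
    refine ge_of_tendsto htend ?_
    filter_upwards [self_mem_nhdsWithin] with ε hε
    exact key ε hε
  -- Step 2: ‖y x - Z₀‖ ≤ ‖Z₀‖ (exp (B₀ x) - 1)
  have hw : ∀ x ∈ Set.Icc (0:ℝ) t, ‖y x - Z₀‖ ≤ ‖Z₀‖ * (Real.exp (B₀ x) - 1) := by
    have hBd : ∀ u, HasDerivAt (fun u => ‖Z₀‖ * (Real.exp (B₀ u) - 1))
        (‖Z₀‖ * (Real.exp (B₀ u) * a u)) u := fun u =>
      (((hB₀d u).exp).sub_const 1).const_mul _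
    intro x hx
    refine image_norm_le_of_norm_deriv_right_le_deriv_boundary
      (f := fun u => y u - Z₀) (f' := fun u => A' u (y u))
      (hycont.sub continuousOn_const)
      (fun u hu => (hy' u hu).sub_const Z₀)
      (by simp [hy0, hB₀0]) hBd ?_ hx
    intro u hu
    calc ‖A' u (y u)‖ ≤ a u * ‖y u‖ := (A' u).le_opNorm _
      _ ≤ a u * (‖Z₀‖ * Real.exp (B₀ u)) := by
          exact mul_le_mul_of_nonneg_left (hgr u (Set.Ico_subset_Icc_self hu)) (hanonneg u)
      _ = ‖Z₀‖ * (Real.exp (B₀ u) * a u) := by ring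
  -- Step 3: the second-order remainder
  set g : ℝ → EuclideanSpace ℝ (Fin n) :=
    fun x => y x - Z₀ - (∫ s in (0:ℝ)..x, A' s) Z₀ with hgdef
  have hI : ∀ x, HasDerivAt (fun u => (∫ s in (0:ℝ)..u, A' s) Z₀) (A' x Z₀) x := by
    intro x
    have h1 : HasDerivAt (fun u => ∫ s in (0:ℝ)..u, A' s) (A' x) x :=
      intervalIntegral.integral_hasDerivAt_right (hA'cont.intervalIntegrable 0 x)
        hA'cont.aestronglyMeasurable.stronglyMeasurableAtFilter hA'cont.continuousAt
    simpa using h1.clm_apply (hasDerivAt_const x Z₀)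
  have hg' : ∀ x ∈ Set.Ico (0:ℝ) t, HasDerivWithinAt g (A' x (y x - Z₀)) (Set.Ici x) x := by
    intro x hx
    have := ((hy x (hsub (Set.Ico_subset_Icc_self hx))).sub_const Z₀).sub (hI x)
    rw [map_sub]
    exact this.hasDerivWithinAt
  have hgcont : ContinuousOn g (Set.Icc 0 t) := by
    apply (hycont.sub continuousOn_const).sub
    intro x hx
    exact ((hI x).continuousAt).continuousWithinAt
  have hBd : ∀ u, HasDerivAt (fun u => ‖Z₀‖ * (Real.exp (B₀ u) - 1 - B₀ u))
      (‖Z₀‖ * (Real.exp (B₀ u) * a u - a u)) u := fun u =>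
    ((((hB₀d u).exp).sub_const 1).sub (hB₀d u)).const_mul _
  have hgle : ‖g t‖ ≤ ‖Z₀‖ * (Real.exp (B₀ t) - 1 - B₀ t) := by
    refine image_norm_le_of_norm_deriv_right_le_deriv_boundary
      (f' := fun u => A' u (y u - Z₀)) hgcont hg'
      (by simp [hgdef, hy0, hB₀0]) hBd ?_ ⟨ht0, le_rfl⟩
    intro u hu
    calc ‖A' u (y u - Z₀)‖ ≤ a u * ‖y u - Z₀‖ := (A' u).le_opNorm _
      _ ≤ a u * (‖Z₀‖ * (Real.exp (B₀ u) - 1)) := by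
          exact mul_le_mul_of_nonneg_left (hw u (Set.Ico_subset_Icc_self hu)) (hanonneg u)
      _ = ‖Z₀‖ * (Real.exp (B₀ u) * a u - a u) := by ring
  -- identify the integrals with the original `A`
  have hEq : Set.EqOn A' A (Set.uIcc 0 t) := by
    intro s hs
    rw [Set.uIcc_of_le ht0] at hs
    exact hA'eq s (hsub hs)
  have hIeq : (∫ s in (0:ℝ)..t, A s) = ∫ s in (0:ℝ)..t, A' s :=
    (intervalIntegral.integral_congr hEq).symm
  have hNeq : (∫ s in (0:ℝ)..t, ‖A s‖) = B₀ t := by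
    refine (intervalIntegral.integral_congr ?_).symm
    intro s hs
    simp only [hadef]
    rw [hEq hs]
  rw [hIeq, hNeq]
  have hX : 0 ≤ B₀ t := by
    apply intervalIntegral.integral_nonneg ht0
    intro u _
    exact hanonneg u
  refine hgle.trans ?_
  set X := B₀ t
  have h1 : X + 1 ≤ Real.exp X := Real.add_one_le_exp X
  have h2 : Real.exp X - 1 ≤ X * Real.exp X := by
    have h := Real.add_one_le_exp (-X)
    rw [Real.exp_neg] at h
    have hp : (0:ℝ) < Real.exp X := Real.exp_pos X
    have hkey : (-X + 1) * Real.exp X ≤ 1 := by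
      calc (-X + 1) * Real.exp X ≤ (Real.exp X)⁻¹ * Real.exp X :=
            mul_le_mul_of_nonneg_right h hp.le
        _ = 1 := inv_mul_cancel₀ hp.ne'
    nlinarith [hkey]
  have h3 : Real.exp X - 1 - X ≤ X ^ 2 * Real.exp X := by
    nlinarith [h2, mul_le_mul_of_nonneg_left h2 hX]
  calc ‖Z₀‖ * (Real.exp X - 1 - X) ≤ ‖Z₀‖ * (X ^ 2 * Real.exp X) :=
        mul_le_mul_of_nonneg_left h3 (norm_nonneg _)
    _ = ‖Z₀‖ * X ^ 2 * Real.exp X := by ring
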